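/- arXiv:2401.13384 — 2 statements merged into one kernel-verified Lean document; each statement's English description precedes it below -/
import Mathlib

section
/- Let H > 1, let ε ∈ (0,1), and define ρ : [1,H] → ℝ by ρ(η) = (1−ε)/(2·(1 + ln H)^{1−ε}·(1 + ln η)^{ε}). Then: (a) ρ is non-increasing on [1,H]; (b) η ↦ η·ρ(η) is non-decreasing on [1,H]; and (c) for every û ∈ [1,H], ρ(H/û) + ∫_1^û ρ(z)/z dz + ∫_1^{H/û} ρ(z)/z dz ≤ 1. -/
open MeasureTheory intervalIntegral Real

lemma integral_rho_aux (ε K : ℝ) (hε0 : 0 < ε) (hε1 : ε < 1) (hK : 0 < K)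
    (u : ℝ) (hu : 1 ≤ u) :
    (∫ z in (1:ℝ)..u, (1 - ε) / (K * (1 + Real.log z) ^ ε) / z)
      = ((1 + Real.log u) ^ (1 - ε) - 1) / K := by
  have hderiv : ∀ x ∈ Set.uIcc (1:ℝ) u,
      HasDerivAt (fun z => (1 + Real.log z) ^ (1 - ε) / K)
        ((1 - ε) / (K * (1 + Real.log x) ^ ε) / x) x := by
    intro x hx
    rw [Set.uIcc_of_le hu] at hx
    have hx1 : (1:ℝ) ≤ x := hx.1
    have hx0 : 0 < x := lt_of_lt_of_le one_pos hx1
    have hl : 0 ≤ Real.log x := Real.log_nonneg hx1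
    have ht : (0:ℝ) < 1 + Real.log x := by linarith
    have h1 : HasDerivAt (fun z => 1 + Real.log z) x⁻¹ x :=
      (Real.hasDerivAt_log (ne_of_gt hx0)).const_add 1
    have h2 := (h1.rpow_const (p := 1 - ε) (Or.inl (ne_of_gt ht))).div_const K
    convert h2 using 1
    · rfl
    · rfl
    have : (1 - ε) - 1 = -ε := by ring
    rw [this, Real.rpow_neg ht.le]
    field_simp
  have hcont : ContinuousOn (fun z => (1 - ε) / (K * (1 + Real.log z) ^ ε) / z)
      (Set.uIcc (1:ℝ) u) := by
    rw [Set.uIcc_of_le hu]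
    apply ContinuousOn.div
    · apply ContinuousOn.div continuousOn_const
      · apply ContinuousOn.mul continuousOn_const
        apply ContinuousOn.rpow_const
        · exact (continuousOn_const.add (Real.continuousOn_log.mono (by
            intro x hx; exact ne_of_gt (lt_of_lt_of_le one_pos hx.1))))
        · intro x hx
          exact Or.inr hε0.le
      · intro x hx
        have ht : (0:ℝ) < 1 + Real.log x := by
          have := Real.log_nonneg hx.1; linarith
        positivity
    · exact continuousOn_id
    · intro x hx
      exact ne_of_gt (lt_of_lt_of_le one_pos hx.1)
  have := intervalIntegral.integral_eq_sub_of_hasDerivAt hderiv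
    (hcont.intervalIntegrable)
  rw [this]
  simp only [Real.log_one, add_zero, Real.one_rpow]
  rw [sub_div, one_div]

/-- The third robustness function of Corollary 1 of the paper:
`ρ(η) = (1-ε)/(2 (1 + ln H)^{1-ε} (1 + ln η)^ε)` is non-increasing on `[1,H]`,
`η·ρ(η)` is non-decreasing on `[1,H]`, and `ρ` satisfies the robustness
condition of Theorem 2 for every prediction `uhat ∈ [1,H]`. -/
theorem third_robustness_function (H : ℝ) (hH : 1 < H)
    (ε : ℝ) (hε0 : 0 < ε) (hε1 : ε < 1) :
    let ρ : ℝ → ℝ := fun η =>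
      (1 - ε) / (2 * (1 + Real.log H) ^ (1 - ε) * (1 + Real.log η) ^ ε)
    AntitoneOn ρ (Set.Icc 1 H) ∧
    MonotoneOn (fun η => η * ρ η) (Set.Icc 1 H) ∧
    (∀ uhat ∈ Set.Icc (1:ℝ) H,
      ρ (H / uhat) + (∫ z in (1:ℝ)..uhat, ρ z / z)
        + (∫ z in (1:ℝ)..(H / uhat), ρ z / z) ≤ 1) := by
  intro ρ
  have hρdef : ∀ η, ρ η = (1 - ε) / (2 * (1 + Real.log H) ^ (1 - ε) * (1 + Real.log η) ^ ε) :=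
    fun η => rfl
  have hLgt : 0 < Real.log H := Real.log_pos hH
  have hL1 : (1:ℝ) ≤ 1 + Real.log H := by linarith
  have hLpos : (0:ℝ) < 1 + Real.log H := by linarith
  have hP : (0:ℝ) < (1 + Real.log H) ^ (1 - ε) := Real.rpow_pos_of_pos hLpos _
  have hKpos : (0:ℝ) < 2 * (1 + Real.log H) ^ (1 - ε) := by positivity
  have h1ε : (0:ℝ) < 1 - ε := by linarith
  refine ⟨?_, ?_, ?_⟩
  · -- (a) Antitone
    intro x hx y hy hxy
    have hx1 : (1:ℝ) ≤ x := hx.1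
    have hy1 : (1:ℝ) ≤ y := hy.1
    have htx : (0:ℝ) < 1 + Real.log x := by have := Real.log_nonneg hx1; linarith
    have hty : (0:ℝ) < 1 + Real.log y := by have := Real.log_nonneg hy1; linarith
    rw [hρdef, hρdef]
    gcongr
  · -- (b) Monotone
    have hcont : ContinuousOn (fun η => η * ρ η) (Set.Icc 1 H) := by
      apply continuousOn_id.mul
      apply ContinuousOn.div continuousOn_const
      · apply ContinuousOn.mul continuousOn_const
        apply ContinuousOn.rpow_const
        · exact (continuousOn_const.add (Real.continuousOn_log.mono (by
            intro x hx; exact ne_of_gt (lt_of_lt_of_le one_pos hx.1))))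
        · intro x hx; exact Or.inr hε0.le
      · intro x hx
        have ht : (0:ℝ) < 1 + Real.log x := by
          have := Real.log_nonneg hx.1; linarith
        positivity
    have hderiv : ∀ x ∈ Set.Ioo (1:ℝ) H,
        HasDerivAt (fun η => η * ρ η)
          ((1 - ε) / (2 * (1 + Real.log H) ^ (1 - ε)) *
            ((1 + Real.log x) ^ (-ε) + x * (x⁻¹ * -ε * (1 + Real.log x) ^ (-ε - 1)))) x := by
      intro x hx
      have hx1 : (1:ℝ) < x := hx.1
      have hx0 : (0:ℝ) < x := lt_trans one_pos hx1
      have ht : (0:ℝ) < 1 + Real.log x := by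
        have := Real.log_nonneg hx1.le; linarith
      have h1 : HasDerivAt (fun z => 1 + Real.log z) x⁻¹ x :=
        (Real.hasDerivAt_log (ne_of_gt hx0)).const_add 1
      have h2 : HasDerivAt (fun z => (1 + Real.log z) ^ (-ε))
          (x⁻¹ * -ε * (1 + Real.log x) ^ (-ε - 1)) x :=
        h1.rpow_const (p := -ε) (Or.inl (ne_of_gt ht))
      have h3 := ((hasDerivAt_id x).mul h2).const_mul
        ((1 - ε) / (2 * (1 + Real.log H) ^ (1 - ε)))
      simp only [id_eq, one_mul, Pi.mul_apply] at h3
      apply h3.congr_of_eventuallyEq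
      filter_upwards [Ioi_mem_nhds hx1] with η hη
      have htη : (0:ℝ) < 1 + Real.log η := by
        have := Real.log_nonneg (le_of_lt hη); linarith
      rw [hρdef, Real.rpow_neg htη.le]
      field_simp
    apply monotoneOn_of_deriv_nonneg (convex_Icc 1 H) hcont
    · rw [interior_Icc]
      intro x hx
      exact (hderiv x hx).differentiableAt.differentiableWithinAt
    · rw [interior_Icc]
      intro x hx
      rw [(hderiv x hx).deriv]
      have hx1 : (1:ℝ) < x := hx.1
      have hx0 : (0:ℝ) < x := lt_trans one_pos hx1
      have ht : (1:ℝ) ≤ 1 + Real.log x := by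
        have := Real.log_nonneg hx1.le; linarith
      have ht0 : (0:ℝ) < 1 + Real.log x := by linarith
      have hxne : x ≠ 0 := ne_of_gt hx0
      have key : (1 + Real.log x) ^ (-ε) + x * (x⁻¹ * -ε * (1 + Real.log x) ^ (-ε - 1))
          = (1 + Real.log x) ^ (-ε - 1) * ((1 + Real.log x) - ε) := by
        have hsplit : (1 + Real.log x) ^ (-ε) = (1 + Real.log x) ^ (-ε - 1) * (1 + Real.log x) := by
          rw [← Real.rpow_add_one (ne_of_gt ht0) (-ε - 1)]
          ring_nf
        rw [hsplit]
        field_simp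
        ring
      rw [key]
      have h1 : (0:ℝ) ≤ (1 + Real.log x) ^ (-ε - 1) := (Real.rpow_pos_of_pos ht0 _).le
      have h2 : (0:ℝ) ≤ (1 + Real.log x) - ε := by linarith
      positivity
  · -- (c) robustness condition
    intro uhat hu
    have hu1 : (1:ℝ) ≤ uhat := hu.1
    have huH : uhat ≤ H := hu.2
    have hu0 : (0:ℝ) < uhat := lt_of_lt_of_le one_pos hu1
    have hq1 : (1:ℝ) ≤ H / uhat := (one_le_div hu0).mpr huH
    have hq0 : (0:ℝ) < H / uhat := lt_of_lt_of_le one_pos hq1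
    set K := 2 * (1 + Real.log H) ^ (1 - ε) with hK
    have hI1 : (∫ z in (1:ℝ)..uhat, ρ z / z)
        = ((1 + Real.log uhat) ^ (1 - ε) - 1) / K :=
      integral_rho_aux ε K hε0 hε1 hKpos uhat hu1
    have hI2 : (∫ z in (1:ℝ)..(H / uhat), ρ z / z)
        = ((1 + Real.log (H / uhat)) ^ (1 - ε) - 1) / K :=
      integral_rho_aux ε K hε0 hε1 hKpos (H / uhat) hq1
    rw [hI1, hI2, hρdef]
    have hlogu : 0 ≤ Real.log uhat := Real.log_nonneg hu1
    have hlogq : 0 ≤ Real.log (H / uhat) := Real.log_nonneg hq1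
    have hluH : Real.log uhat ≤ Real.log H := Real.log_le_log hu0 huH
    have hlqH : Real.log (H / uhat) ≤ Real.log H := by
      rw [Real.log_div (ne_of_gt (lt_trans one_pos hH)) (ne_of_gt hu0)]
      linarith
    have htq : (1:ℝ) ≤ 1 + Real.log (H / uhat) := by linarith
    have htq0 : (0:ℝ) < 1 + Real.log (H / uhat) := by linarith
    -- bound the rho term
    have hρb : (1 - ε) / (K * (1 + Real.log (H / uhat)) ^ ε) ≤ 1 / K := by
      have h1 : (1:ℝ) ≤ (1 + Real.log (H / uhat)) ^ ε :=
        Real.one_le_rpow htq hε0.le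
      rw [div_le_div_iff₀ (by positivity) hKpos]
      nlinarith [hKpos]
    have ha : (1 + Real.log uhat) ^ (1 - ε) ≤ (1 + Real.log H) ^ (1 - ε) :=
      Real.rpow_le_rpow (by linarith) (by linarith) h1ε.le
    have hb : (1 + Real.log (H / uhat)) ^ (1 - ε) ≤ (1 + Real.log H) ^ (1 - ε) :=
      Real.rpow_le_rpow (by linarith) (by linarith) h1ε.le
    have hfinal : 1 / K + ((1 + Real.log uhat) ^ (1 - ε) - 1) / K
        + ((1 + Real.log (H / uhat)) ^ (1 - ε) - 1) / K ≤ 1 := by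
      rw [← add_div, ← add_div, div_le_one hKpos]
      have : K = 2 * (1 + Real.log H) ^ (1 - ε) := hK
      nlinarith
    calc (1 - ε) / (K * (1 + Real.log (H / uhat)) ^ ε)
          + ((1 + Real.log uhat) ^ (1 - ε) - 1) / K
          + ((1 + Real.log (H / uhat)) ^ (1 - ε) - 1) / K
        ≤ 1 / K + ((1 + Real.log uhat) ^ (1 - ε) - 1) / K
          + ((1 + Real.log (H / uhat)) ^ (1 - ε) - 1) / K := by linarith [hρb]
      _ ≤ 1 := hfinal
end

section
/- Let ε ∈ (0,1] and define ρ : [1,∞) → ℝ by ρ(η) = 1/((π/ε + 1)·(1 + (ln η)^{1+ε})). Then for all real numbers a ≥ 1 and b ≥ 1, ρ(b) + ∫_1^a ρ(z)/z dz + ∫_1^b ρ(z)/z dz ≤ 1. -/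
open MeasureTheory intervalIntegral Real
open Set

lemma key_pointwise (ε u : ℝ) (hε0 : 0 < ε) (hε1 : ε ≤ 1) (hu0 : 0 < u) (hu1 : u ≤ 1) :
    1 / (1 + u ^ (1 + ε)) + u ^ (ε - 1) / (1 + u ^ (1 + ε))
      ≤ 2 * u ^ (ε - 1) / (1 + u ^ (2 * ε)) := by
  have hA : (1:ℝ) ≤ u ^ (ε - 1) :=
    Real.one_le_rpow_of_pos_of_le_one_of_nonpos hu0 hu1 (by linarith)
  have hB : u ^ (2 * ε) ≤ 1 := Real.rpow_le_one hu0.le hu1 (by linarith)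
  have hB0 : (0:ℝ) ≤ u ^ (2 * ε) := Real.rpow_nonneg hu0.le _
  have hD0 : (0:ℝ) ≤ u ^ (1 + ε) := Real.rpow_nonneg hu0.le _
  have hprod : u ^ (ε - 1) * u ^ (1 + ε) = u ^ (2 * ε) := by
    rw [← Real.rpow_add hu0]; ring_nf
  have hd1 : (0:ℝ) < 1 + u ^ (1 + ε) := by linarith
  have hd2 : (0:ℝ) < 1 + u ^ (2 * ε) := by linarith
  rw [← add_div, div_le_div_iff₀ hd1 hd2]
  nlinarith [mul_nonneg (sub_nonneg.2 hA) (sub_nonneg.2 hB)]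

lemma intInt_aux (ε q c : ℝ) (hε0 : 0 < ε) (hq : 0 ≤ q) :
    IntervalIntegrable (fun u : ℝ => c * u ^ (ε - 1) / (1 + u ^ q)) volume 0 1 := by
  have base : IntervalIntegrable (fun u : ℝ => c * u ^ (ε - 1)) volume 0 1 :=
    (intervalIntegrable_rpow' (by linarith)).const_mul c
  refine base.mono_fun ?_ ?_
  · apply Measurable.aestronglyMeasurable
    measurability
  · filter_upwards [self_mem_ae_restrict measurableSet_uIoc] with u hu
    rw [uIoc_of_le zero_le_one] at hu
    have hr : (0:ℝ) ≤ u ^ q := Real.rpow_nonneg hu.1.le q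
    have hd : (1:ℝ) ≤ |1 + u ^ q| := by
      rw [abs_of_nonneg (by linarith)]; linarith
    simp only [Real.norm_eq_abs, abs_div]
    calc |c * u ^ (ε - 1)| / |1 + u ^ q| ≤ |c * u ^ (ε - 1)| / 1 := by
          gcongr
      _ = |c * u ^ (ε - 1)| := div_one _

lemma int_g_val (ε : ℝ) (hε0 : 0 < ε) :
    ∫ u in (0:ℝ)..1, 2 * u ^ (ε - 1) / (1 + u ^ (2 * ε)) = π / (2 * ε) := by
  have hcont : Continuous fun u : ℝ => (2 / ε) * arctan (u ^ ε) := by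
    refine continuous_const.mul (Real.continuous_arctan.comp ?_)
    rw [continuous_iff_continuousAt]; intro x
    exact Real.continuousAt_rpow_const x ε (Or.inr hε0.le)
  have hderiv : ∀ u ∈ Ioo (0:ℝ) 1,
      HasDerivWithinAt (fun u : ℝ => (2 / ε) * arctan (u ^ ε))
        (2 * u ^ (ε - 1) / (1 + u ^ (2 * ε))) (Ioi u) u := by
    intro u hu
    have h1 : HasDerivAt (fun u : ℝ => u ^ ε) (ε * u ^ (ε - 1)) u :=
      Real.hasDerivAt_rpow_const (Or.inl hu.1.ne')
    have h2 : HasDerivAt arctan (1 / (1 + (u ^ ε) ^ 2)) (u ^ ε) :=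
      Real.hasDerivAt_arctan _
    have h3 := (h2.comp u h1).const_mul (2 / ε)
    have hsq : (u ^ ε) ^ 2 = u ^ (2 * ε) := by
      rw [sq, ← Real.rpow_add hu.1]; ring_nf
    have hval : (2 / ε) * (1 / (1 + (u ^ ε) ^ 2) * (ε * u ^ (ε - 1)))
        = 2 * u ^ (ε - 1) / (1 + u ^ (2 * ε)) := by
      rw [hsq]
      have hd : (0:ℝ) < 1 + u ^ (2 * ε) := by
        nlinarith [Real.rpow_nonneg hu.1.le (2 * ε)]
      field_simp
    rw [hval] at h3
    exact h3.hasDerivWithinAt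
  have h := integral_eq_sub_of_hasDeriv_right_of_le zero_le_one hcont.continuousOn
    hderiv ((intInt_aux ε (2 * ε) 2 hε0 (by linarith)))
  rw [h]
  rw [Real.one_rpow, Real.zero_rpow hε0.ne', Real.arctan_one, Real.arctan_zero]
  field_simp; ring

lemma contOn_f1 (p : ℝ) (hp : 0 < p) :
    ContinuousOn (fun t : ℝ => 1 / (1 + t ^ p)) (Ici 0) := by
  have hb : ContinuousOn (fun t : ℝ => 1 + t ^ p) (Ici 0) :=
    continuousOn_const.add fun t _ =>
      (Real.continuousAt_rpow_const t p (Or.inr hp.le)).continuousWithinAt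
  exact continuousOn_const.div hb fun t ht => by
    have := Real.rpow_nonneg ht p
    positivity

lemma ae_ne_zero : ∀ᵐ u : ℝ, u ≠ 0 := by
  rw [Filter.eventually_iff, mem_ae_iff]
  convert Real.volume_singleton (a := (0:ℝ)) using 2
  ext u; simp

lemma J_bound (ε T : ℝ) (hε0 : 0 < ε) (hε1 : ε ≤ 1) (hT : 0 ≤ T) :
    ∫ t in (0:ℝ)..T, 1 / (1 + t ^ (1 + ε)) ≤ π / (2 * ε) := by
  have hπ1 : (1:ℝ) ≤ π / (2 * ε) := by
    rw [le_div_iff₀ (by positivity)]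
    nlinarith [Real.pi_gt_three]
  have hp : (0:ℝ) < 1 + ε := by linarith
  have hint : ∀ c d : ℝ, 0 ≤ c → 0 ≤ d →
      IntervalIntegrable (fun t : ℝ => 1 / (1 + t ^ (1 + ε))) volume c d := by
    intro c d hc hd
    apply ContinuousOn.intervalIntegrable
    apply (contOn_f1 (1 + ε) hp).mono
    intro x hx
    rcases le_total c d with h | h
    · rw [uIcc_of_le h] at hx; exact le_trans hc hx.1
    · rw [uIcc_of_ge h] at hx; exact le_trans hd hx.1
  rcases le_or_gt T 1 with hT1 | hT1
  · calc ∫ t in (0:ℝ)..T, 1 / (1 + t ^ (1 + ε)) ≤ ∫ t in (0:ℝ)..T, 1 := by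
          apply integral_mono_on hT (hint 0 T le_rfl hT) intervalIntegrable_const
          intro t ht
          have h0 : (0:ℝ) ≤ t ^ (1 + ε) := Real.rpow_nonneg ht.1 _
          rw [div_le_one (by linarith)]; linarith
      _ = T := by simp
      _ ≤ π / (2 * ε) := le_trans hT1 hπ1
  · have hT0 : (0:ℝ) < T := lt_trans one_pos hT1
    have hTi0 : (0:ℝ) < T⁻¹ := inv_pos.2 hT0
    have hTi1 : T⁻¹ ≤ 1 := by rw [inv_le_one_iff₀]; right; exact hT1.le
    have hf2int : IntervalIntegrable (fun u : ℝ => u ^ (ε - 1) / (1 + u ^ (1 + ε)))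
        volume 0 1 := by
      have := intInt_aux ε (1 + ε) 1 hε0 hp.le
      simpa using this
    have hsplit := integral_add_adjacent_intervals (hint 0 1 le_rfl zero_le_one)
      (hint 1 T zero_le_one hT0.le)
    rw [← hsplit]
    have hmem : ∀ u ∈ uIcc T⁻¹ (1:ℝ), 0 < u := by
      intro u hu
      rw [uIcc_of_le hTi1] at hu
      exact lt_of_lt_of_le hTi0 hu.1
    have hsub : ∫ t in (1:ℝ)..T, 1 / (1 + t ^ (1 + ε))
        = ∫ u in T⁻¹..(1:ℝ), u ^ (ε - 1) / (1 + u ^ (1 + ε)) := by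
      have hder : ∀ u ∈ uIcc T⁻¹ (1:ℝ),
          HasDerivAt (fun u : ℝ => u⁻¹) (-((u:ℝ) ^ 2)⁻¹) u := fun u hu =>
        hasDerivAt_inv (hmem u hu).ne'
      have hcont' : ContinuousOn (fun u : ℝ => -((u:ℝ) ^ 2)⁻¹) (uIcc T⁻¹ 1) := by
        refine ContinuousOn.neg (ContinuousOn.inv₀ (by fun_prop) ?_)
        intro u hu
        exact pow_ne_zero 2 (hmem u hu).ne'
      have him : (fun u : ℝ => u⁻¹) '' (uIcc T⁻¹ 1) ⊆ Ici 0 := by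
        rintro x ⟨u, hu, rfl⟩
        exact (inv_pos.2 (hmem u hu)).le
      have hcv := integral_comp_smul_deriv' hder hcont' ((contOn_f1 (1 + ε) hp).mono him)
      simp only [inv_inv, inv_one] at hcv
      have hcongr : EqOn
          (fun u : ℝ => (-((u:ℝ) ^ 2)⁻¹) • ((fun t : ℝ => 1 / (1 + t ^ (1 + ε))) ∘ fun u => u⁻¹) u)
          (fun u : ℝ => -(u ^ (ε - 1) / (1 + u ^ (1 + ε)))) (uIcc T⁻¹ 1) := by
        intro u hu
        have hu0 := hmem u hu
        have h1 : (u⁻¹ : ℝ) ^ (1 + ε) = (u ^ (1 + ε))⁻¹ := Real.inv_rpow hu0.le _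
        have h2 : u ^ (1 + ε) = u ^ (ε - 1) * u ^ 2 := by
          rw [show ((u:ℝ) ^ 2) = u ^ (2:ℝ) by
                rw [← Real.rpow_natCast u 2]; norm_num,
            ← Real.rpow_add hu0]
          ring_nf
        have hup : 0 < u ^ (1 + ε) := Real.rpow_pos_of_pos hu0 _
        have h3 : 0 < u ^ (ε - 1) := Real.rpow_pos_of_pos hu0 _
        simp only [Function.comp, smul_eq_mul, h1]
        rw [h2]
        field_simp
        ring
      rw [integral_congr hcongr, intervalIntegral.integral_neg, integral_symm 1 T] at hcv
      linarith [hcv]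
    rw [hsub]
    have hmono2 : (∫ u in T⁻¹..(1:ℝ), u ^ (ε - 1) / (1 + u ^ (1 + ε)))
        ≤ ∫ u in (0:ℝ)..1, u ^ (ε - 1) / (1 + u ^ (1 + ε)) := by
      apply integral_mono_interval hTi0.le hTi1 le_rfl ?_ hf2int
      filter_upwards [ae_restrict_mem measurableSet_Ioc] with u hu
      have h0 : 0 < u := hu.1
      have := Real.rpow_nonneg h0.le (1 + ε)
      positivity
    have hf1int := hint 0 1 le_rfl zero_le_one
    have hsum := integral_add hf1int hf2int
    have hfinal : (∫ u in (0:ℝ)..1,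
        (1 / (1 + u ^ (1 + ε)) + u ^ (ε - 1) / (1 + u ^ (1 + ε))))
        ≤ ∫ u in (0:ℝ)..1, 2 * u ^ (ε - 1) / (1 + u ^ (2 * ε)) := by
      apply integral_mono_ae_restrict zero_le_one (hf1int.add hf2int)
        (intInt_aux ε (2 * ε) 2 hε0 (by linarith))
      filter_upwards [ae_restrict_mem measurableSet_Icc, ae_restrict_of_ae ae_ne_zero]
        with u hu hne
      exact key_pointwise ε u hε0 hε1 (lt_of_le_of_ne hu.1 (Ne.symm hne)) hu.2
    rw [int_g_val ε hε0] at hfinal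
    rw [hsum] at hfinal
    linarith

/-- The uniform inequality behind the first robustness function of Corollary 1:
for `ρ(η) = 1/((π/ε + 1)(1 + ln^{1+ε} η))` and all `a, b ≥ 1`,
`ρ(b) + ∫_1^a ρ(z)/z dz + ∫_1^b ρ(z)/z dz ≤ 1`. -/
theorem first_robustness_function_uniform (ε : ℝ) (hε0 : 0 < ε) (hε1 : ε ≤ 1) :
    let ρ : ℝ → ℝ := fun η => 1 / ((π / ε + 1) * (1 + Real.log η ^ (1 + ε)))
    ∀ a b : ℝ, 1 ≤ a → 1 ≤ b →
      ρ b + (∫ z in (1:ℝ)..a, ρ z / z) + (∫ z in (1:ℝ)..b, ρ z / z) ≤ 1 := by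
  intro ρ a b ha hb
  have hρ : ρ = fun η => 1 / ((π / ε + 1) * (1 + Real.log η ^ (1 + ε))) := rfl
  have hC0 : 0 < π / ε + 1 := by
    have := div_pos Real.pi_pos hε0; linarith
  -- continuity of z ↦ ρ z / z on [1, ∞)
  have hcg : ContinuousOn (fun z : ℝ => ρ z / z) (Ici 1) := by
    rw [hρ]
    apply ContinuousOn.div ?_ continuousOn_id (fun z hz => by
      have : (1:ℝ) ≤ z := hz; positivity)
    apply ContinuousOn.div continuousOn_const ?_ ?_
    · apply continuousOn_const.mul (continuousOn_const.add ?_)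
      intro z hz
      have h1 : (1:ℝ) ≤ z := hz
      exact (((Real.continuousAt_rpow_const (Real.log z) (1 + ε)
        (Or.inr (by linarith))).comp (Real.continuousAt_log (by linarith)))).continuousWithinAt
    · intro z hz
      have h1 : (1:ℝ) ≤ z := hz
      have hl : 0 ≤ Real.log z := Real.log_nonneg h1
      have hr : 0 ≤ Real.log z ^ (1 + ε) := Real.rpow_nonneg hl _
      positivity
  -- the per-integral bound
  have hkey : ∀ x : ℝ, 1 ≤ x →
      (∫ z in (1:ℝ)..x, ρ z / z) ≤ 1 / (π / ε + 1) * (π / (2 * ε)) := by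
    intro x hx
    have hx0 : (0:ℝ) < x := lt_of_lt_of_le one_pos hx
    have hlx : 0 ≤ Real.log x := Real.log_nonneg hx
    have hder : ∀ t ∈ uIcc (0:ℝ) (Real.log x), HasDerivAt Real.exp (Real.exp t) t :=
      fun t _ => Real.hasDerivAt_exp t
    have him : Real.exp '' (uIcc (0:ℝ) (Real.log x)) ⊆ Ici 1 := by
      rintro y ⟨t, ht, rfl⟩
      rw [uIcc_of_le hlx] at ht
      exact Real.one_le_exp ht.1
    have hcv := integral_comp_smul_deriv' hder Real.continuous_exp.continuousOn
      (hcg.mono him)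
    rw [Real.exp_zero, Real.exp_log hx0] at hcv
    have hcongr : ∀ t : ℝ,
        Real.exp t • ((fun z : ℝ => ρ z / z) ∘ Real.exp) t
          = 1 / (π / ε + 1) * (1 / (1 + t ^ (1 + ε))) := by
      intro t
      simp only [Function.comp, smul_eq_mul, hρ, Real.log_exp]
      rw [mul_comm, div_mul_cancel₀ _ (Real.exp_ne_zero t), one_div_mul_one_div]
    simp only [hcongr] at hcv
    rw [← hcv, intervalIntegral.integral_const_mul]
    have hJ := J_bound ε (Real.log x) hε0 hε1 hlx
    have h1C : 0 ≤ 1 / (π / ε + 1) := by positivity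
    exact mul_le_mul_of_nonneg_left hJ h1C
  -- ρ b ≤ 1/C
  have hρb : ρ b ≤ 1 / (π / ε + 1) := by
    rw [hρ]
    have hl : 0 ≤ Real.log b := Real.log_nonneg hb
    have hr : 0 ≤ Real.log b ^ (1 + ε) := Real.rpow_nonneg hl _
    apply one_div_le_one_div_of_le hC0
    nlinarith
  have hsum : 1 / (π / ε + 1) + 1 / (π / ε + 1) * (π / (2 * ε))
      + 1 / (π / ε + 1) * (π / (2 * ε)) = 1 := by
    field_simp
    ring
  linarith [hkey a ha, hkey b hb]
end
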